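/- Let p > 0 and a, b be real numbers, and set B := 1/p + b. There exists a constant C such that for every integer n ≥ 1 and all integers l, m with 1 ≤ l ≤ m ≤ n+1, writing ν := l/n and λ := m/n, one has |(1/(n+1))·Σ_{i=m}^{n+1} (ν + B·(1 − e^{p(ν − i/n)}) + a·e^{p(ν − i/n)}) − (−λ·ν + ν + B·(1−λ) − (1/p)·(B − a)·(e^{−p(λ−ν)} − e^{−p(1−ν)}))| ≤ C/n. -/

import Mathlib

set_option maxHeartbeats 1000000

theorem sum_eval (p a b : ℝ) (hp : 0 < p) (n l m : ℕ) (hn : 1 ≤ n) (hmn : m ≤ n+1) :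
    ∑ i ∈ Finset.Icc m (n + 1),
        ((l : ℝ) / n + (1 / p + b) * (1 - Real.exp (p * ((l : ℝ) / n - (i : ℝ) / n)))
          + a * Real.exp (p * ((l : ℝ) / n - (i : ℝ) / n)))
      = ((n:ℝ)+2-m) * ((l:ℝ)/n + (1/p+b))
        - ((1/p+b) - a) *
          ((Real.exp (-p*(1-(l:ℝ)/n)) * Real.exp (-(2*p)/n) - Real.exp (-p*((m:ℝ)/n - (l:ℝ)/n)))
            / (Real.exp (-p/n) - 1)) := by
  have hn0 : (0:ℝ) < n := by exact_mod_cast hn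
  set r := Real.exp (-p/n) with hr
  have hterm : ∀ i : ℕ, ((l : ℝ) / n + (1 / p + b) * (1 - Real.exp (p * ((l : ℝ) / n - (i : ℝ) / n)))
          + a * Real.exp (p * ((l : ℝ) / n - (i : ℝ) / n)))
        = ((l:ℝ)/n + (1/p+b)) - ((1/p+b) - a) * (Real.exp (p * ((l:ℝ)/n)) * r ^ i) := by
    intro i
    have : Real.exp (p * ((l : ℝ) / n - (i : ℝ) / n)) = Real.exp (p * ((l:ℝ)/n)) * r ^ i := by
      rw [hr, ← Real.exp_nat_mul, ← Real.exp_add]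
      ring_nf
    rw [this]; ring
  have hrne : r ≠ 1 := by
    rw [hr]
    intro h
    rw [Real.exp_eq_one_iff] at h
    have : (0:ℝ) < p / n := div_pos hp hn0
    rw [neg_div] at h
    linarith [h]
  have hIco : Finset.Icc m (n+1) = Finset.Ico m (n+2) := by rw [← Finset.Ico_add_one_right_eq_Icc (a := m) (b := n+1)]; rfl
  have hrm : Real.exp (p * ((l:ℝ)/n)) * r ^ m = Real.exp (-p*((m:ℝ)/n - (l:ℝ)/n)) := by
    rw [hr, ← Real.exp_nat_mul, ← Real.exp_add]
    congr 1; field_simp; ring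
  have hrn2 : Real.exp (p * ((l:ℝ)/n)) * r ^ (n+2) = Real.exp (-p*(1-(l:ℝ)/n)) * Real.exp (-(2*p)/n) := by
    rw [hr, ← Real.exp_nat_mul, ← Real.exp_add, ← Real.exp_add]
    congr 1; push_cast; field_simp; ring
  have hgs : ∑ i ∈ Finset.Icc m (n+1), (Real.exp (p * ((l:ℝ)/n)) * r ^ i)
      = (Real.exp (-p*(1-(l:ℝ)/n)) * Real.exp (-(2*p)/n) - Real.exp (-p*((m:ℝ)/n - (l:ℝ)/n))) / (r-1) := by
    rw [hIco, ← Finset.mul_sum, geom_sum_Ico hrne (by omega), mul_div_assoc', mul_sub, hrn2, hrm]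
  have hcard : ((n + 1 + 1 - m : ℕ) : ℝ) = (n:ℝ) + 2 - m := by
    push_cast [Nat.cast_sub (by omega : m ≤ n+1+1)]
    ring
  rw [Finset.sum_congr rfl (fun i _ => hterm i), Finset.sum_sub_distrib, Finset.sum_const,
    Nat.card_Icc, ← Finset.mul_sum, hgs, nsmul_eq_mul, hcard]

/-- uniform `O(1/n)` estimate of the Riemann-type sum
`(1/(n+1))·Σ_{i=m}^{n+1} (ν + B·(1 − e^{p(ν − i/n)}) + a·e^{p(ν − i/n)})`, where `B := 1/p + b`,
`ν = l/n`, `λ = m/n`, by `−λ·ν + ν + B·(1−λ) − (1/p)·(B − a)·(e^{−p(λ−ν)} − e^{−p(1−ν)})`. -/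
theorem stmt_14 (p a b : ℝ) (hp : 0 < p) :
    ∃ C : ℝ, ∀ n : ℕ, 1 ≤ n → ∀ l m : ℕ, 1 ≤ l → l ≤ m → m ≤ n + 1 →
      |(1 / ((n : ℝ) + 1))
            * ∑ i ∈ Finset.Icc m (n + 1),
                ((l : ℝ) / n + (1 / p + b) * (1 - Real.exp (p * ((l : ℝ) / n - (i : ℝ) / n)))
                  + a * Real.exp (p * ((l : ℝ) / n - (i : ℝ) / n)))
          - (-((m : ℝ) / n) * ((l : ℝ) / n) + (l : ℝ) / n
              + (1 / p + b) * (1 - (m : ℝ) / n)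
              - (1 / p) * ((1 / p + b) - a)
                  * (Real.exp (-p * ((m : ℝ) / n - (l : ℝ) / n))
                      - Real.exp (-p * (1 - (l : ℝ) / n))))|
        ≤ C / n := by
  refine ⟨2*(2 + |1/p + b|) + |1/p + b - a| * ((1+p)*Real.exp p/p + 2*Real.exp p), ?_⟩
  intro n hn l m hl hlm hmn
  have hn0 : (0:ℝ) < n := by exact_mod_cast hn
  have hn1 : (1:ℝ) ≤ n := by exact_mod_cast hn
  have hm1 : (m:ℝ) ≤ (n:ℝ) + 1 := by exact_mod_cast hmn
  have hlm' : (l:ℝ) ≤ (m:ℝ) := by exact_mod_cast hlm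
  rw [sum_eval p a b hp n l m hn hmn]
  set ν := (l:ℝ)/n with hν
  set lam := (m:ℝ)/n with hlam
  set B := 1/p + b with hB
  set E1 := Real.exp (-p*((m:ℝ)/n - (l:ℝ)/n)) with hE1
  set E2 := Real.exp (-p*(1-(l:ℝ)/n)) with hE2
  set q2 := Real.exp (-(2*p)/n) with hq2
  set r := Real.exp (-p/n) with hr
  set u := ((n:ℝ)+1)*(1-r) with hu
  have hpn0 : (0:ℝ) < p/n := div_pos hp hn0
  have hrpos : 0 < r := hr ▸ Real.exp_pos _
  have hr1 : r < 1 := by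
    rw [hr]
    exact Real.exp_lt_one_iff.mpr (div_neg_of_neg_of_pos (neg_lt_zero.mpr hp) hn0)
  have hupos : 0 < u := by rw [hu]; exact mul_pos (by linarith) (by linarith)
  -- key algebraic identity
  have hkey : (1 / ((n:ℝ) + 1)) * (((n:ℝ)+2-m) * (ν + B) - (B - a) * ((E2*q2 - E1)/(r-1)))
        - (-lam * ν + ν + B * (1 - lam) - 1/p * (B - a) * (E1 - E2))
      = (ν + B) * (((n:ℝ)+m)/((n:ℝ)*((n:ℝ)+1)))
        - (B - a) * ((E1 - E2*q2)/u - (E1 - E2)/p) := by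
    rw [hν, hlam, hu]
    have h1 : ((n:ℝ)+1) ≠ 0 := by linarith
    have h2 : (r:ℝ) - 1 ≠ 0 := by linarith
    have h3 : (1:ℝ) - r ≠ 0 := by linarith
    field_simp
    ring
  rw [hkey]
  clear_value ν lam B E1 E2 q2 r u
  -- basic quantities
  have hν0 : 0 ≤ ν := by rw [hν]; positivity
  have hν2 : ν ≤ 2 := by
    rw [hν, div_le_iff₀ hn0]
    have : (l:ℝ) ≤ (n:ℝ) + 1 := le_trans hlm' hm1
    linarith
  have hE1pos : 0 < E1 := hE1 ▸ Real.exp_pos _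
  have hE2pos : 0 < E2 := hE2 ▸ Real.exp_pos _
  have hq2pos : 0 < q2 := hq2 ▸ Real.exp_pos _
  have hE1le : E1 ≤ 1 := by
    rw [hE1, Real.exp_le_one_iff]
    have h : (l:ℝ)/n ≤ (m:ℝ)/n := by gcongr
    have := mul_nonneg hp.le (sub_nonneg.mpr h)
    linarith
  have hq2le : q2 ≤ 1 := by
    rw [hq2, Real.exp_le_one_iff]
    have : (0:ℝ) < 2*p/n := by positivity
    rw [neg_div]
    linarith
  have hE2q2leE1 : E2 * q2 ≤ E1 := by
    rw [hE2, hq2, hE1, ← Real.exp_add]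
    apply Real.exp_le_exp.mpr
    have hm2 : (m:ℝ)/n ≤ 1 + 2/n := by
      rw [div_le_iff₀ hn0]
      have he : (1+2/(n:ℝ))*n = n + 2 := by field_simp
      linarith [hm1, he.ge]
    have h := mul_le_mul_of_nonneg_left hm2 hp.le
    ring_nf at h ⊢
    linarith [h]
  have hE2ub : E2 ≤ Real.exp p := by
    rw [hE2]
    apply Real.exp_le_exp.mpr
    have h : (l:ℝ)/n ≤ 2 := hν ▸ hν2
    have h2 := mul_le_mul_of_nonneg_left h hp.le
    ring_nf at h2 ⊢
    linarith [h2]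
  have h1q2 : 1 - q2 ≤ 2*p/n := by
    have h := Real.one_sub_le_exp_neg (2*p/n)
    have h2 : q2 = Real.exp (-(2*p/n)) := by rw [hq2]; congr 1; ring
    linarith [h, h2.le, h2.ge]
  -- r and u estimates
  have hrlb : 1 - p/n ≤ r := by
    have h := Real.one_sub_le_exp_neg (p/n)
    rw [hr, neg_div]
    exact h
  have hpru : p * r ≤ (n:ℝ) * (1-r) := by
    have h := Real.add_one_le_exp (p/n)
    have h2 : (p/n + 1) * r ≤ 1 := by
      have h' := mul_le_mul_of_nonneg_right h (le_of_lt hrpos)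
      rw [hr] at h' ⊢
      rw [← Real.exp_add] at h'
      have hz : p/(n:ℝ) + -p/n = 0 := by ring
      rwa [hz, Real.exp_zero] at h'
    have h3 : p/n * r ≤ 1 - r := by ring_nf at h2 ⊢; linarith [h2]
    have h4 := mul_le_mul_of_nonneg_left h3 hn0.le
    have h5 : (n:ℝ) * (p/n * r) = p * r := by field_simp
    linarith [h4, h5.symm.le]
  have hepr : Real.exp (-p) ≤ r := by
    rw [hr]
    apply Real.exp_le_exp.mpr
    rw [neg_div]
    have := div_le_self hp.le hn1
    linarith
  have hulb : p * Real.exp (-p) ≤ u := by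
    have h1 : p * Real.exp (-p) ≤ p * r := mul_le_mul_of_nonneg_left hepr hp.le
    have h2 : (n:ℝ) * (1-r) ≤ u := by
      rw [hu]
      exact mul_le_mul_of_nonneg_right (by linarith) (by linarith)
    linarith
  have hpu : |p - u| ≤ (p + p^2)/n := by
    have hub : u ≤ p + p/n := by
      rw [hu]
      have h1 : 1 - r ≤ p/n := by linarith [hrlb]
      have h2 : ((n:ℝ)+1) * (1-r) ≤ ((n:ℝ)+1) * (p/n) :=
        mul_le_mul_of_nonneg_left h1 (by linarith)
      have h3 : ((n:ℝ)+1) * (p/n) = p + p/n := by field_simp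
      linarith
    have hlb : p - p^2/n ≤ u := by
      have h1 : p * (1 - p/n) ≤ p * r := mul_le_mul_of_nonneg_left hrlb hp.le
      have h2 : (n:ℝ)*(1-r) ≤ u := by
        rw [hu]
        exact mul_le_mul_of_nonneg_right (by linarith) (by linarith)
      have h3 : p * (1 - p/n) = p - p^2/n := by field_simp
      linarith [hpru]
    rw [abs_le]
    have heq : (p+p^2)/(n:ℝ) = p/n + p^2/n := by ring
    have hpn2 : (0:ℝ) ≤ p^2/(n:ℝ) := by positivity
    constructor
    · linarith [hub, heq.le, heq.ge, hpn2]
    · linarith [hlb, heq.le, heq.ge, hpn0.le]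
  -- bound on D
  have hDid : (E1 - E2*q2)/u - (E1 - E2)/p
      = (E1 - E2*q2) * ((p-u)/(u*p)) + E2*(1-q2)/p := by
    have hu0 : u ≠ 0 := ne_of_gt hupos
    have hp0 : p ≠ 0 := ne_of_gt hp
    field_simp
    ring
  have hD1 : |(E1 - E2*q2) * ((p-u)/(u*p))| ≤ ((1+p)*Real.exp p/p)/n := by
    rw [abs_mul, abs_div, abs_of_pos (mul_pos hupos hp)]
    have hA : |E1 - E2*q2| ≤ 1 := by
      rw [abs_le]
      have hz : 0 < E2*q2 := mul_pos hE2pos hq2pos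
      constructor
      · linarith [hz, hE1pos, hE1le]
      · linarith [hz, hE2q2leE1, hE1le]
    have hB2 : |p - u| / (u*p) ≤ ((p+p^2)/n) / ((p*Real.exp (-p))*p) := by
      apply div_le_div₀ (by positivity) hpu (by positivity)
      exact mul_le_mul_of_nonneg_right hulb hp.le
    have hE : ((p+p^2)/n) / ((p*Real.exp (-p))*p) = ((1+p)*Real.exp p/p)/n := by
      rw [Real.exp_neg]
      field_simp
    calc |E1 - E2*q2| * (|p-u|/(u*p))
        ≤ 1 * (((p+p^2)/n) / ((p*Real.exp (-p))*p)) :=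
          mul_le_mul hA hB2 (by positivity) (by norm_num)
      _ = ((1+p)*Real.exp p/p)/n := by rw [one_mul, hE]
  have hD2 : E2*(1-q2)/p ≤ (2*Real.exp p)/n := by
    have h1 : E2*(1-q2) ≤ Real.exp p * (2*p/n) :=
      mul_le_mul hE2ub h1q2 (by linarith) (Real.exp_pos _).le
    have h2 : Real.exp p * (2*p/n) / p = (2*Real.exp p)/n := by
      field_simp
    calc E2*(1-q2)/p ≤ (Real.exp p * (2*p/n))/p :=
          div_le_div₀ (by positivity) h1 hp le_rfl
      _ = (2*Real.exp p)/n := h2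
  have hD : |(E1 - E2*q2)/u - (E1 - E2)/p| ≤ ((1+p)*Real.exp p/p + 2*Real.exp p)/n := by
    rw [hDid]
    have hnn : 0 ≤ E2*(1-q2)/p := div_nonneg (mul_nonneg hE2pos.le (by linarith)) hp.le
    calc |(E1 - E2*q2) * ((p-u)/(u*p)) + E2*(1-q2)/p|
        ≤ |(E1 - E2*q2) * ((p-u)/(u*p))| + |E2*(1-q2)/p| := abs_add_le _ _
      _ ≤ ((1+p)*Real.exp p/p)/n + (2*Real.exp p)/n := by
          apply add_le_add hD1
          rw [abs_of_nonneg hnn]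
          exact hD2
      _ = ((1+p)*Real.exp p/p + 2*Real.exp p)/n := by ring
  -- bound on the first term
  have hΔ : (0:ℝ) ≤ ((n:ℝ)+m)/((n:ℝ)*((n:ℝ)+1)) := by positivity
  have hΔle : ((n:ℝ)+m)/((n:ℝ)*((n:ℝ)+1)) ≤ 2/n := by
    rw [div_le_div_iff₀ (by positivity) hn0]
    have h := mul_le_mul_of_nonneg_right hm1 hn0.le
    have h2 : (0:ℝ) ≤ (n:ℝ)*(n:ℝ) := by positivity
    ring_nf at h ⊢
    linarith [h, h2]
  have hX : |ν + B| ≤ 2 + |B| := by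
    calc |ν + B| ≤ |ν| + |B| := abs_add_le _ _
      _ ≤ 2 + |B| := by
          rw [abs_of_nonneg hν0]
          linarith [hν2]
  -- final assembly
  calc |(ν + B) * (((n:ℝ)+m)/((n:ℝ)*((n:ℝ)+1))) - (B - a) * ((E1 - E2*q2)/u - (E1 - E2)/p)|
      ≤ |(ν + B) * (((n:ℝ)+m)/((n:ℝ)*((n:ℝ)+1)))| + |(B - a) * ((E1 - E2*q2)/u - (E1 - E2)/p)| :=
        abs_sub _ _
    _ = |ν + B| * (((n:ℝ)+m)/((n:ℝ)*((n:ℝ)+1))) + |B - a| * |(E1 - E2*q2)/u - (E1 - E2)/p| := by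
        rw [abs_mul, abs_mul, abs_of_nonneg hΔ]
    _ ≤ (2 + |B|) * (2/n) + |B - a| * (((1+p)*Real.exp p/p + 2*Real.exp p)/n) := by
        apply add_le_add
        · exact mul_le_mul hX hΔle hΔ (by positivity)
        · exact mul_le_mul_of_nonneg_left hD (abs_nonneg _)
    _ = (2*(2 + |B|) + |B - a| * ((1+p)*Real.exp p/p + 2*Real.exp p)) / n := by
        ring
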